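/- Let ω = (ω₁, …, ωₙ) be a ℚ-vector space basis of ℚⁿ such that 0 ≺_ω eᵢ for every standard basis vector eᵢ (i.e. ≺_ω is a term order), and let F ⊂ ℚⁿ be a finite set of vectors with 0 ≺_ω v for every v ∈ F. Then there exists a vector w ∈ ℚⁿ all of whose coordinates are positive such that ⟨w, v⟩ > 0 for every v ∈ F. -/

import Mathlib

/-- Dot product of two vectors in `ℚⁿ`. -/
def dotp {n : ℕ} (u v : Fin n → ℚ) : ℚ := ∑ i, u i * v i

/-- The rational group order `≺_ω` associated to a family `ω`:
`u ≺_ω v` iff `(⟨ω₁,u⟩, …, ⟨ωₙ,u⟩)` is lexicographically smaller than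
`(⟨ω₁,v⟩, …, ⟨ωₙ,v⟩)`. -/
def precW {n : ℕ} (ω : Fin n → Fin n → ℚ) (u v : Fin n → ℚ) : Prop :=
  ∃ i : Fin n, (∀ j : Fin n, j < i → dotp (ω j) u = dotp (ω j) v) ∧
    dotp (ω i) u < dotp (ω i) v

/-- The perturbed vector `ω_ε = ω₁ + ε·ω₂ + ⋯ + ε^(n-1)·ωₙ`. -/
def pert {n : ℕ} (ω : Fin n → Fin n → ℚ) (ε : ℚ) : Fin n → ℚ :=
  fun j => ∑ i : Fin n, ε ^ (i : ℕ) * ω i j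

lemma key_poly {n : ℕ} (c : Fin n → ℚ) (k : Fin n) (h0 : ∀ j, j < k → c j = 0)
    (hk : 0 < c k) :
    ∃ δ : ℚ, 0 < δ ∧ ∀ ε : ℚ, 0 < ε → ε ≤ δ → 0 < ∑ i : Fin n, ε ^ (i : ℕ) * c i := by
  set M : ℚ := ∑ i : Fin n, |c i| with hMdef
  have hM0 : 0 ≤ M := Finset.sum_nonneg fun i _ => abs_nonneg _
  refine ⟨min 1 (c k / (M + 1)), lt_min one_pos (by positivity), ?_⟩
  intro ε hε hεδ
  have hε1 : ε ≤ 1 := hεδ.trans (min_le_left _ _)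
  have h2 : ε ≤ c k / (M + 1) := hεδ.trans (min_le_right _ _)
  have hεM : ε * M < c k := by
    rw [le_div_iff₀ (by positivity)] at h2
    nlinarith
  have hsplit : ∑ i : Fin n, ε ^ (i : ℕ) * c i
      = ε ^ (k : ℕ) * c k + ∑ i ∈ Finset.univ.erase k, ε ^ (i : ℕ) * c i :=
    (Finset.add_sum_erase _ _ (Finset.mem_univ k)).symm
  have hbound : ∀ i ∈ Finset.univ.erase k,
      -(ε ^ ((k : ℕ) + 1) * |c i|) ≤ ε ^ (i : ℕ) * c i := by
    intro i hi
    have hik : i ≠ k := (Finset.mem_erase.mp hi).1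
    rcases lt_or_gt_of_ne hik with h | h
    · rw [h0 i h]
      simp
    · have hle : ε ^ (i : ℕ) ≤ ε ^ ((k : ℕ) + 1) := by
        apply pow_le_pow_of_le_one hε.le hε1
        exact_mod_cast h
      have h1 : -|c i| ≤ c i := neg_abs_le _
      nlinarith [abs_nonneg (c i), pow_pos hε (i : ℕ), pow_pos hε ((k : ℕ) + 1)]
  have hsum : -(ε ^ ((k : ℕ) + 1) * M) ≤ ∑ i ∈ Finset.univ.erase k, ε ^ (i : ℕ) * c i := by
    calc -(ε ^ ((k : ℕ) + 1) * M)
        ≤ -(ε ^ ((k : ℕ) + 1) * ∑ i ∈ Finset.univ.erase k, |c i|) := by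
          have : ∑ i ∈ Finset.univ.erase k, |c i| ≤ M := by
            apply Finset.sum_le_sum_of_subset_of_nonneg (Finset.erase_subset _ _)
            intro i _ _; exact abs_nonneg _
          nlinarith [pow_pos hε ((k : ℕ) + 1)]
      _ = ∑ i ∈ Finset.univ.erase k, -(ε ^ ((k : ℕ) + 1) * |c i|) := by
          rw [Finset.mul_sum, Finset.sum_neg_distrib]
      _ ≤ _ := Finset.sum_le_sum hbound
  have hpk : 0 < ε ^ (k : ℕ) := pow_pos hε _
  have : ε ^ ((k : ℕ) + 1) * M = ε ^ (k : ℕ) * (ε * M) := by ring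
  rw [hsplit]
  nlinarith
lemma perv {n : ℕ} (ω : Fin n → Fin n → ℚ) (v : Fin n → ℚ) (h : precW ω 0 v) :
    ∃ δ : ℚ, 0 < δ ∧ ∀ ε : ℚ, 0 < ε → ε ≤ δ → 0 < dotp (pert ω ε) v := by
  obtain ⟨k, h0, hk⟩ := h
  have hz : ∀ j : Fin n, dotp (ω j) 0 = 0 := by intro j; simp [dotp]
  obtain ⟨δ, hδ, hδ'⟩ := key_poly (fun i => dotp (ω i) v) k
    (fun j hj => by show dotp (ω j) v = 0; rw [← h0 j hj, hz]) (by show 0 < dotp (ω k) v; rw [← hz k]; exact hk)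
  refine ⟨δ, hδ, fun ε hε hεδ => ?_⟩
  have : dotp (pert ω ε) v = ∑ i : Fin n, ε ^ (i : ℕ) * dotp (ω i) v := by
    simp only [dotp, pert, Finset.sum_mul, Finset.mul_sum, mul_assoc]
    rw [Finset.sum_comm]
  rw [this]
  exact hδ' ε hε hεδ

lemma allG {n : ℕ} (ω : Fin n → Fin n → ℚ) (G : Finset (Fin n → ℚ))
    (hG : ∀ v ∈ G, precW ω 0 v) :
    ∃ δ : ℚ, 0 < δ ∧ ∀ ε : ℚ, 0 < ε → ε ≤ δ → ∀ v ∈ G, 0 < dotp (pert ω ε) v := by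
  classical
  induction G using Finset.induction_on with
  | empty => exact ⟨1, one_pos, by simp⟩
  | @insert a s ha ih =>
    obtain ⟨δ₁, hδ₁, h₁⟩ := perv ω a (hG a (Finset.mem_insert_self _ _))
    obtain ⟨δ₂, hδ₂, h₂⟩ := ih (fun v hv => hG v (Finset.mem_insert_of_mem hv))
    refine ⟨min δ₁ δ₂, lt_min hδ₁ hδ₂, fun ε hε hεδ v hv => ?_⟩
    rcases Finset.mem_insert.mp hv with rfl | hv
    · exact h₁ ε hε (hεδ.trans (min_le_left _ _))
    · exact h₂ ε hε (hεδ.trans (min_le_right _ _)) v hv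

theorem stmt2 {n : ℕ} (ω : Fin n → Fin n → ℚ)
    (hind : LinearIndependent ℚ ω)
    (hspan : Submodule.span ℚ (Set.range ω) = ⊤)
    (hterm : ∀ i : Fin n, precW ω 0 (Pi.single i 1))
    (F : Finset (Fin n → ℚ))
    (hF : ∀ v ∈ F, precW ω 0 v) :
    ∃ w : Fin n → ℚ, (∀ i, 0 < w i) ∧ ∀ v ∈ F, 0 < dotp w v := by
  classical
  set G : Finset (Fin n → ℚ) := F ∪ Finset.univ.image (fun i => Pi.single i 1) with hGdef
  have hG : ∀ v ∈ G, precW ω 0 v := by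
    intro v hv
    rcases Finset.mem_union.mp hv with hv | hv
    · exact hF v hv
    · obtain ⟨i, _, rfl⟩ := Finset.mem_image.mp hv
      exact hterm i
  obtain ⟨δ, hδ, h⟩ := allG ω G hG
  refine ⟨pert ω δ, ?_, ?_⟩
  · intro i
    have := h δ hδ le_rfl (Pi.single i 1)
      (Finset.mem_union_right _ (Finset.mem_image.mpr ⟨i, Finset.mem_univ i, rfl⟩))
    have heq : dotp (pert ω δ) (Pi.single i 1) = pert ω δ i := by
      simp [dotp, Pi.single_apply, mul_ite]
    rw [heq] at this
    exact this
  · intro v hv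
    exact h δ hδ le_rfl v (Finset.mem_union_left _ hv)
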